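/- Let X be a reflexive real Banach space and let Φ, Ψ : X → ℝ be two Gâteaux differentiable functionals such that Φ is continuous in the norm topology, sequentially weakly lower semicontinuous and coercive, and Ψ is sequentially weakly upper semicontinuous. For r > inf_X Φ define φ(r) := inf over w with Φ(w) < r of [ (sup over z with Φ(z) < r of Ψ(z)) − Ψ(w) ] / (r − Φ(w)). Then for every r > inf_X Φ and every λ > 0 with λ·φ(r) < 1, there exists w₀ ∈ X with Φ(w₀) < r such that Φ(w₀) − λΨ(w₀) ≤ Φ(w) − λΨ(w) for every w ∈ X with Φ(w) < r; moreover w₀ is a local minimum of J_λ := Φ − λΨ on X and a critical point of J_λ, i.e. Φ'(w₀) = λΨ'(w₀). -/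

import Mathlib

set_option maxHeartbeats 1000000

open Filter Topology NormedSpace Set TopologicalSpace

section RicceriAux

variable {X : Type*} [NormedAddCommGroup X] [NormedSpace ℝ X]

/-- Separation of a point from a closed submodule by a continuous functional vanishing
on the submodule. -/
lemma exists_dual_vanishing_ne_zero {E : Type*} [NormedAddCommGroup E] [NormedSpace ℝ E]
    (M : Submodule ℝ E) (hM : IsClosed (M : Set E))
    {x : E} (hx : x ∉ M) :
    ∃ f : E →L[ℝ] ℝ, (∀ y ∈ M, f y = 0) ∧ f x ≠ 0 := by
  obtain ⟨f, u, hfx, hfM⟩ :=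
    geometric_hahn_banach_point_closed (M.convex) hM hx
  have hzero : ∀ y ∈ M, f y = 0 := by
    intro y hy
    by_contra hne
    -- scale to contradict u < f (t • y)
    have h1 : ∀ t : ℝ, u < t * f y := by
      intro t
      have := hfM (t • y) (M.smul_mem t hy)
      simpa [map_smul, smul_eq_mul] using this
    have := h1 ((u - 1) / f y)
    rw [div_mul_cancel₀ _ hne] at this
    linarith
  have hu : u < 0 := by simpa using hfM 0 M.zero_mem
  exact ⟨f, hzero, by intro h; rw [h] at hfx; linarith⟩


/-- If the dual of a normed space is separable, so is the space. -/
lemma separable_of_separable_dual {E : Type*} [NormedAddCommGroup E] [NormedSpace ℝ E]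
    [SeparableSpace (StrongDual ℝ E)] : SeparableSpace E := by
  obtain ⟨g, hg⟩ := TopologicalSpace.exists_dense_seq (StrongDual ℝ E)
  -- choose almost-norming vectors
  have hex : ∀ k : ℕ, ∃ z : E, ‖z‖ ≤ 1 ∧ ‖g k‖ / 2 ≤ |g k z| := by
    intro k
    rcases eq_or_ne (g k) 0 with h0 | h0
    · exact ⟨0, by simp [h0]⟩
    by_contra hcon
    push_neg at hcon
    have hb : ‖g k‖ ≤ ‖g k‖ / 2 := by
      apply (g k).opNorm_le_bound' (by positivity)
      intro z hz
      rcases eq_or_ne z 0 with rfl | hzne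
      · simp
      have h1 : ‖(‖z‖⁻¹ • z)‖ ≤ 1 := by
        rw [norm_smul, norm_inv, norm_norm, inv_mul_cancel₀ (norm_ne_zero_iff.2 hzne)]
      have := (hcon (‖z‖⁻¹ • z) h1).le
      rw [map_smul, smul_eq_mul, abs_mul, abs_inv, abs_norm] at this
      calc ‖(g k) z‖ = ‖z‖ * (‖z‖⁻¹ * |(g k) z|) := by
            rw [← mul_assoc, mul_inv_cancel₀ (norm_ne_zero_iff.2 hzne), one_mul]
            exact (Real.norm_eq_abs _)
        _ ≤ ‖z‖ * (‖g k‖ / 2) := by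
            apply mul_le_mul_of_nonneg_left this (norm_nonneg _)
        _ = ‖g k‖ / 2 * ‖z‖ := by ring
    have : 0 < ‖g k‖ := norm_pos_iff.2 h0
    linarith
  choose z hz1 hz2 using hex
  set M : Submodule ℝ E := (Submodule.span ℝ (Set.range z)).topologicalClosure with hM
  have hMall : ∀ x : E, x ∈ M := by
    intro x
    by_contra hx
    obtain ⟨f, hf0, hfx⟩ := exists_dual_vanishing_ne_zero M
      (Submodule.isClosed_topologicalClosure _) hx
    have hfpos : 0 < ‖f‖ := norm_pos_iff.2 (by
      intro h; rw [h] at hfx; exact hfx rfl)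
    obtain ⟨k, hk⟩ : ∃ k, dist (g k) f < ‖f‖ / 4 := by
      have := hg.exists_dist_lt f (by positivity : (0:ℝ) < ‖f‖ / 4)
      obtain ⟨k, hk⟩ := this
      exact ⟨k, by rwa [dist_comm] at hk⟩
    have hgk : ‖f‖ - ‖f‖/4 ≤ ‖g k‖ := by
      have := norm_sub_norm_le f (g k)
      rw [dist_eq_norm] at hk
      have h2 : ‖f - g k‖ < ‖f‖/4 := by rwa [norm_sub_rev]
      linarith
    have hzM : z k ∈ M := by
      apply Submodule.le_topologicalClosure
      exact Submodule.subset_span ⟨k, rfl⟩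
    have hfz : f (z k) = 0 := hf0 _ hzM
    have hsmall : |g k (z k)| ≤ ‖f‖/4 := by
      have : |g k (z k)| = |(g k - f) (z k)| := by simp [hfz]
      rw [this]
      calc |(g k - f) (z k)| ≤ ‖g k - f‖ * ‖z k‖ := (g k - f).le_opNorm _
        _ ≤ ‖f‖/4 * 1 := by
            apply mul_le_mul _ (hz1 k) (norm_nonneg _) (by positivity)
            rw [dist_eq_norm] at hk; exact hk.le
        _ = ‖f‖/4 := mul_one _
    have := hz2 k
    linarith
  -- separability
  have hsep : IsSeparable (univ : Set E) := by
    have h1 : IsSeparable (M : Set E) := by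
      rw [hM]
      exact ((countable_range z).isSeparable.span).closure
    apply h1.mono
    intro x _
    exact hMall x
  exact (isSeparable_univ_iff).1 hsep


/-- A closed subspace of a reflexive space is reflexive. -/
lemma reflexive_closed_submodule
    (hrefl : Function.Surjective (inclusionInDoubleDual ℝ X))
    (Y : Submodule ℝ X) (hY : IsClosed (Y : Set X)) :
    Function.Surjective (inclusionInDoubleDual ℝ ↥Y) := by
  intro Λ
  -- restriction map X* →L Y*
  set T : StrongDual ℝ X →L[ℝ] StrongDual ℝ ↥Y :=
    (ContinuousLinearMap.compL ℝ ↥Y X ℝ).flip Y.subtypeL with hT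
  have hTapp : ∀ (f : StrongDual ℝ X) (y : ↥Y), T f y = f ↑y := fun f y => rfl
  obtain ⟨x, hx⟩ := hrefl (Λ.comp T)
  have hxval : ∀ f : StrongDual ℝ X, f x = Λ (T f) := by
    intro f
    have := congrFun (congrArg DFunLike.coe hx) f
    simpa [inclusionInDoubleDual] using this
  have hxY : x ∈ Y := by
    by_contra hxY
    obtain ⟨f, hf0, hfx⟩ := exists_dual_vanishing_ne_zero Y hY hxY
    have hTf : T f = 0 := by
      ext y
      simpa [hTapp] using hf0 ↑y y.2
    have := hxval f
    rw [hTf] at this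
    simp at this
    exact hfx this
  refine ⟨⟨x, hxY⟩, ?_⟩
  ext g
  obtain ⟨f, hfg, -⟩ := exists_extension_norm_eq Y g
  have hTfg : T f = g := by ext y; simpa [hTapp] using hfg y
  have : f x = Λ (T f) := hxval f
  rw [hTfg] at this
  simpa [inclusionInDoubleDual, ← hfg ⟨x, hxY⟩] using this


/-- Weak sequential compactness of bounded sequences in a reflexive space. -/
lemma weak_seq_compact (hrefl : Function.Surjective (inclusionInDoubleDual ℝ X))
    {u : ℕ → X} {R : ℝ} (hu : ∀ n, ‖u n‖ ≤ R) :
    ∃ (x : X) (φ : ℕ → ℕ), StrictMono φ ∧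
      ∀ f : X →L[ℝ] ℝ, Tendsto (fun j => f (u (φ j))) atTop (𝓝 (f x)) := by
  classical
  set Y : Submodule ℝ X := (Submodule.span ℝ (Set.range u)).topologicalClosure with hYdef
  have hYc : IsClosed (Y : Set X) := Submodule.isClosed_topologicalClosure _
  have huY : ∀ n, u n ∈ Y :=
    fun n => Submodule.le_topologicalClosure _ (Submodule.subset_span ⟨n, rfl⟩)
  set y : ℕ → ↥Y := fun n => ⟨u n, huY n⟩ with hydef
  have hYsep : IsSeparable (Y : Set X) := ((countable_range u).isSeparable.span).closure
  haveI : SeparableSpace ↥Y := hYsep.separableSpace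
  have hYrefl := reflexive_closed_submodule hrefl Y hYc
  haveI : SeparableSpace (StrongDual ℝ (StrongDual ℝ ↥Y)) := by
    have hd : DenseRange (inclusionInDoubleDual ℝ ↥Y) := hYrefl.denseRange
    exact hd.separableSpace (inclusionInDoubleDual ℝ ↥Y).continuous
  haveI : SeparableSpace (StrongDual ℝ ↥Y) := separable_of_separable_dual (E := StrongDual ℝ ↥Y)
  set R' : ℝ := max R 0 with hR'
  have hyR : ∀ n, ‖y n‖ ≤ R' := fun n => le_trans (hu n) (le_max_left _ _)
  -- limit along an ultrafilter
  set U : Ultrafilter ℕ := Ultrafilter.of atTop with hU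
  have hUatTop : (U : Filter ℕ) ≤ atTop := Ultrafilter.of_le atTop
  have hlim : ∀ g : StrongDual ℝ ↥Y, ∃ L, Tendsto (fun n => g (y n)) (U : Filter ℕ) (𝓝 L) := by
    intro g
    have hmem : ∀ n, g (y n) ∈ Set.Icc (-(‖g‖ * R')) (‖g‖ * R') := by
      intro n
      have h1 : |g (y n)| ≤ ‖g‖ * R' := by
        calc |g (y n)| ≤ ‖g‖ * ‖y n‖ := g.le_opNorm _
          _ ≤ ‖g‖ * R' := by
              apply mul_le_mul_of_nonneg_left (hyR n) (by positivity)
      exact abs_le.1 h1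
    have hle : (U.map fun n => g (y n) : Filter ℝ) ≤ 𝓟 (Set.Icc (-(‖g‖ * R')) (‖g‖ * R')) := by
      rw [le_principal_iff, Ultrafilter.coe_map, Filter.mem_map]
      exact Filter.univ_mem' hmem
    obtain ⟨L, _, hL⟩ := (isCompact_Icc).ultrafilter_le_nhds (U.map fun n => g (y n)) hle
    exact ⟨L, hL⟩
  choose F hF using hlim
  have hFbound : ∀ g, ‖F g‖ ≤ R' * ‖g‖ := by
    intro g
    have h1 : ∀ n, |g (y n)| ≤ R' * ‖g‖ := by
      intro n
      calc |g (y n)| ≤ ‖g‖ * ‖y n‖ := g.le_opNorm _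
        _ ≤ ‖g‖ * R' := mul_le_mul_of_nonneg_left (hyR n) (by positivity)
        _ = R' * ‖g‖ := mul_comm _ _
    have habs : Tendsto (fun n => |g (y n)|) (U : Filter ℕ) (𝓝 |F g|) := (hF g).abs
    rw [Real.norm_eq_abs]
    exact le_of_tendsto habs (Eventually.of_forall h1)
  set Λ : StrongDual ℝ (StrongDual ℝ ↥Y) := LinearMap.mkContinuous
    { toFun := F
      map_add' := fun g h => tendsto_nhds_unique (hF (g + h))
        (by simpa using ((hF g).add (hF h)))
      map_smul' := fun c g => tendsto_nhds_unique (hF (c • g))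
        (by simpa using ((hF g).const_mul c)) }
    R' hFbound with hΛ
  obtain ⟨y₀, hy₀⟩ := hYrefl Λ
  have hy₀g : ∀ g : StrongDual ℝ ↥Y, Tendsto (fun n => g (y n)) (U : Filter ℕ) (𝓝 (g y₀)) := by
    intro g
    have h1 : g y₀ = F g := by
      have := congrFun (congrArg DFunLike.coe hy₀) g
      simpa [inclusionInDoubleDual, hΛ] using this
    rw [h1]; exact hF g
  -- dense sequence in the dual of Y
  haveI : Nonempty (StrongDual ℝ ↥Y) := ⟨0⟩
  obtain ⟨gs, hgs⟩ := TopologicalSpace.exists_dense_seq (StrongDual ℝ ↥Y)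
  -- extraction of a subsequence
  have hstep : ∀ (j N : ℕ), ∃ m, N < m ∧ ∀ k ≤ j, |gs k (y m) - gs k y₀| < 1 / (j + 1) := by
    intro j N
    have h1 : ∀ᶠ m in (U : Filter ℕ), ∀ k ∈ Set.Iic j, |gs k (y m) - gs k y₀| < 1 / (j + 1) := by
      rw [(Set.finite_Iic j).eventually_all]
      intro k _
      have := (hy₀g (gs k))
      have h2 := Metric.tendsto_nhds.1 this (1 / (j + 1)) (by positivity)
      simpa [Real.dist_eq] using h2
    have h2 : ∀ᶠ m in (U : Filter ℕ), N < m := hUatTop (eventually_gt_atTop N)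
    obtain ⟨m, hm1, hm2⟩ := (h2.and h1).exists
    exact ⟨m, hm1, fun k hk => hm2 k hk⟩
  set n : ℕ → ℕ := fun j => Nat.rec (Classical.choose (hstep 0 0))
    (fun j ih => Classical.choose (hstep (j + 1) ih)) j with hn
  have hn0 : ∀ k ≤ 0, |gs k (y (n 0)) - gs k y₀| < 1 / (((0:ℕ):ℝ) + 1) :=
    (Classical.choose_spec (hstep 0 0)).2
  have hnsucc : ∀ j, n j < n (j + 1) ∧
      ∀ k ≤ j + 1, |gs k (y (n (j + 1))) - gs k y₀| < 1 / (((j + 1 : ℕ):ℝ) + 1) := by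
    intro j
    exact Classical.choose_spec (hstep (j + 1) (n j))
  have hmono : StrictMono n := strictMono_nat_of_lt_succ fun j => (hnsucc j).1
  have hnP : ∀ j, ∀ k ≤ j, |gs k (y (n j)) - gs k y₀| < 1 / ((j:ℝ) + 1) := by
    intro j
    cases j with
    | zero => exact_mod_cast hn0
    | succ j =>
        have := (hnsucc j).2
        intro k hk
        have h2 := this k hk
        exact_mod_cast h2
  -- convergence for each gs k
  have hconv0 : ∀ k, Tendsto (fun j => gs k (y (n j))) atTop (𝓝 (gs k y₀)) := by
    intro k
    rw [Metric.tendsto_atTop]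
    intro ε hε
    obtain ⟨J, hJ⟩ := exists_nat_one_div_lt hε
    refine ⟨max k J, fun j hj => ?_⟩
    have hk : k ≤ j := le_trans (le_max_left _ _) hj
    have hJj : J ≤ j := le_trans (le_max_right _ _) hj
    have h1 := hnP j k hk
    rw [Real.dist_eq]
    have h2 : 1 / ((j : ℝ) + 1) ≤ 1 / (J + 1) := by
      apply one_div_le_one_div_of_le (by positivity)
      exact_mod_cast Nat.succ_le_succ hJj
    calc |gs k (y (n j)) - gs k y₀| < 1 / (j + 1) := h1
      _ ≤ 1 / (J + 1) := h2
      _ < ε := hJ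
  -- convergence for every g in the dual of Y
  have hconv : ∀ g : StrongDual ℝ ↥Y, Tendsto (fun j => g (y (n j))) atTop (𝓝 (g y₀)) := by
    intro g
    rw [Metric.tendsto_atTop]
    intro ε hε
    set C : ℝ := R' + ‖y₀‖ + 1 with hC
    have hCpos : 0 < C := by positivity
    obtain ⟨k, hk⟩ := hgs.exists_dist_lt g (show (0:ℝ) < ε / 3 / C by positivity)
    obtain ⟨J, hJ⟩ := (Metric.tendsto_atTop.1 (hconv0 k)) (ε / 3) (by positivity)
    refine ⟨J, fun j hj => ?_⟩
    have h1 : ‖g - gs k‖ < ε / 3 / C := by exact lt_of_eq_of_lt (dist_eq_norm g (gs k)).symm hk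
    have h2 : |gs k (y (n j)) - gs k y₀| < ε / 3 := by
      have := hJ j hj; rwa [Real.dist_eq] at this
    have h3 : |g (y (n j)) - gs k (y (n j))| ≤ ε / 3 / C * R' := by
      calc |g (y (n j)) - gs k (y (n j))| = |(g - gs k) (y (n j))| := by
            simp [ContinuousLinearMap.sub_apply]
        _ ≤ ‖g - gs k‖ * ‖y (n j)‖ := (g - gs k).le_opNorm _
        _ ≤ ε / 3 / C * R' := by
            apply mul_le_mul h1.le (hyR _) (norm_nonneg _) (by positivity)
    have h4 : |gs k y₀ - g y₀| ≤ ε / 3 / C * ‖y₀‖ := by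
      calc |gs k y₀ - g y₀| = |(gs k - g) y₀| := by simp [ContinuousLinearMap.sub_apply]
        _ ≤ ‖gs k - g‖ * ‖y₀‖ := (gs k - g).le_opNorm _
        _ ≤ ε / 3 / C * ‖y₀‖ := by
            apply mul_le_mul _ le_rfl (norm_nonneg _) (by positivity)
            exact (le_of_eq (norm_sub_rev (gs k) g)).trans h1.le
    have hR'C : ε / 3 / C * R' + ε / 3 / C * ‖y₀‖ ≤ ε / 3 + ε / 3 := by
      have : ε / 3 / C * (R' + ‖y₀‖) ≤ ε / 3 / C * C := by
        apply mul_le_mul_of_nonneg_left _ (by positivity)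
        rw [hC]; linarith
      rw [div_mul_cancel₀] at this
      · linarith [this]
      · exact ne_of_gt hCpos
    rw [Real.dist_eq]
    calc |g (y (n j)) - g y₀| ≤ |g (y (n j)) - gs k (y (n j))| +
          |gs k (y (n j)) - gs k y₀| + |gs k y₀ - g y₀| := by
          have := abs_sub_le (g (y (n j))) (gs k (y (n j))) (g y₀)
          have h5 := abs_sub_le (gs k (y (n j))) (gs k y₀) (g y₀)
          linarith
      _ < ε / 3 / C * R' + ε / 3 + (ε / 3 / C * ‖y₀‖ + 0) := by
          linarith
      _ ≤ ε := by linarith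
  refine ⟨↑y₀, n, hmono, fun f => ?_⟩
  have := hconv (f.comp Y.subtypeL)
  simpa using this


/-- Gâteaux differentiability implies continuity along line segments. -/
lemma continuous_along_line {Ψ : X → ℝ} {Ψ' : X → (X →L[ℝ] ℝ)}
    (hg : ∀ w v : X,
      Tendsto (fun t : ℝ => (Ψ (w + t • v) - Ψ w) / t) (𝓝[≠] (0 : ℝ)) (𝓝 (Ψ' w v)))
    (x v : X) : Continuous fun t : ℝ => Ψ (x + t • v) := by
  rw [continuous_iff_continuousAt]
  intro t₀
  set w : X := x + t₀ • v with hw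
  have key : Tendsto (fun s : ℝ => Ψ (w + s • v)) (𝓝 0) (𝓝 (Ψ w)) := by
    rw [← nhdsNE_sup_pure (0 : ℝ)]
    rw [tendsto_sup]
    constructor
    · have h1 : Tendsto (fun s : ℝ => ((Ψ (w + s • v) - Ψ w) / s) * s + Ψ w)
          (𝓝[≠] (0 : ℝ)) (𝓝 (Ψ' w v * 0 + Ψ w)) := by
        apply Tendsto.add _ tendsto_const_nhds
        exact (hg w v).mul (tendsto_nhdsWithin_of_tendsto_nhds tendsto_id)
      rw [mul_zero, zero_add] at h1
      apply h1.congr'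
      filter_upwards [self_mem_nhdsWithin] with s hs
      have hs' : s ≠ 0 := hs
      field_simp
      ring
    · simp only [Filter.tendsto_pure_left]
      intro s hs
      simpa using mem_of_mem_nhds hs
  have hcomp : Tendsto (fun t : ℝ => t - t₀) (𝓝 t₀) (𝓝 0) := by
    have := tendsto_id (x := 𝓝 t₀) |>.sub (tendsto_const_nhds (x := t₀))
    simpa using this
  have hline : ∀ t : ℝ, w + (t - t₀) • v = x + t • v := by
    intro t
    rw [hw, add_assoc, ← add_smul]
    congr 1
    ring
  have h2 := (key.comp hcomp).congr (fun t => by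
    show Ψ (w + (t - t₀) • v) = Ψ (x + t • v)
    rw [hline t])
  exact h2


/-- weak convergence of points moved along segments towards the weak limit -/
lemma weak_tendsto_segment {v : ℕ → X} {x : X} {t : ℕ → ℝ}
    (ht : ∀ j, t j ∈ Set.Icc (0:ℝ) 1)
    (hv : ∀ f : X →L[ℝ] ℝ, Tendsto (fun j => f (v j)) atTop (𝓝 (f x))) :
    ∀ f : X →L[ℝ] ℝ, Tendsto (fun j => f (x + t j • (v j - x))) atTop (𝓝 (f x)) := by
  intro f
  have heq : ∀ j, f (x + t j • (v j - x)) - f x = t j * (f (v j) - f x) := by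
    intro j
    simp only [map_add, map_smul, map_sub, smul_eq_mul]
    ring
  have h0 : Tendsto (fun j => f (v j) - f x) atTop (𝓝 0) := by
    have := (hv f).sub (tendsto_const_nhds (x := f x))
    simpa using this
  have h1 : Tendsto (fun j => t j * (f (v j) - f x)) atTop (𝓝 0) := by
    apply squeeze_zero_norm _ (by simpa using h0.norm)
    intro j
    rw [norm_mul]
    have h2 : ‖t j‖ ≤ 1 := by
      rw [Real.norm_eq_abs, abs_le]; constructor <;> linarith [(ht j).1, (ht j).2]
    calc ‖t j‖ * ‖f (v j) - f x‖ ≤ 1 * ‖f (v j) - f x‖ :=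
          mul_le_mul_of_nonneg_right h2 (norm_nonneg _)
      _ = ‖f (v j) - f x‖ := one_mul _
  have h3 : Tendsto (fun j => f (x + t j • (v j - x))) atTop (𝓝 (0 + f x)) := by
    have := h1.add (tendsto_const_nhds (x := f x))
    apply this.congr
    intro j
    rw [← heq j]; ring
  simpa using h3

/-- A sequentially weakly lsc functional, continuous along segments, is bounded below on balls. -/
lemma bddBelow_of_wlsc (hrefl : Function.Surjective (inclusionInDoubleDual ℝ X))
    {Θ : X → ℝ}
    (hline : ∀ x v : X, Continuous fun t : ℝ => Θ (x + t • v))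
    (hwlsc : ∀ (u : ℕ → X) (x : X),
      (∀ f : X →L[ℝ] ℝ, Tendsto (fun n => f (u n)) atTop (𝓝 (f x))) →
      Θ x ≤ Filter.liminf (fun n => Θ (u n)) atTop)
    (R : ℝ) : ∃ C, ∀ w, ‖w‖ ≤ R → C ≤ Θ w := by
  by_contra hcon
  push_neg at hcon
  have hex : ∀ n : ℕ, ∃ w, ‖w‖ ≤ R ∧ Θ w < -(n : ℝ) := fun n => hcon (-(n : ℝ))
  choose u hu1 hu2 using hex
  obtain ⟨x, φ, hφ, hweak⟩ := weak_seq_compact hrefl hu1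
  set C₀ : ℝ := |Θ x| + 1 with hC₀
  set N : ℕ := ⌈C₀⌉₊ with hN
  have hNC : C₀ ≤ (N : ℝ) := Nat.le_ceil _
  set v : ℕ → X := fun j => u (φ (j + N)) with hv
  have hvweak : ∀ f : X →L[ℝ] ℝ, Tendsto (fun j => f (v j)) atTop (𝓝 (f x)) := by
    intro f
    exact (hweak f).comp (tendsto_add_atTop_nat N)
  have hvval : ∀ j, Θ (v j) < -C₀ := by
    intro j
    have h1 : Θ (v j) < -((φ (j + N) : ℕ) : ℝ) := hu2 _
    have h2 : (N : ℝ) ≤ ((φ (j + N) : ℕ) : ℝ) := by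
      exact_mod_cast le_trans (Nat.le_add_left N j) (hφ.le_apply)
    linarith
  -- IVT: find points with value exactly -C₀
  have hivt : ∀ j : ℕ, ∃ t ∈ Set.Icc (0:ℝ) 1, Θ (x + t • (v j - x)) = -C₀ := by
    intro j
    have hc : ContinuousOn (fun t : ℝ => Θ (x + t • (v j - x))) (Set.Icc 0 1) :=
      (hline x (v j - x)).continuousOn
    have key := intermediate_value_Icc' (le_of_lt one_pos) hc
    have hmem : -C₀ ∈ Set.Icc (Θ (x + (1:ℝ) • (v j - x))) (Θ (x + (0:ℝ) • (v j - x))) := by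
      constructor
      · have : x + (1:ℝ) • (v j - x) = v j := by simp
        rw [this]; exact (hvval j).le
      · have : x + (0:ℝ) • (v j - x) = x := by simp
        rw [this]
        have := neg_abs_le (Θ x)
        rw [hC₀]; linarith
    obtain ⟨t, ht1, ht2⟩ := key hmem
    exact ⟨t, ht1, ht2⟩
  choose t ht1 ht2 using hivt
  set z : ℕ → X := fun j => x + t j • (v j - x) with hz
  have hzweak := weak_tendsto_segment ht1 hvweak
  have hwl := hwlsc z x hzweak
  have hliminf : Filter.liminf (fun j => Θ (z j)) atTop = -C₀ := by
    have : (fun j => Θ (z j)) = fun _ => -C₀ := funext fun j => ht2 j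
    rw [this]
    exact Filter.liminf_const _
  rw [hliminf] at hwl
  have := neg_abs_le (Θ x)
  rw [hC₀] at hwl
  linarith

/-- A sequentially weakly usc functional, continuous along segments, is bounded above on balls. -/
lemma bddAbove_of_wusc (hrefl : Function.Surjective (inclusionInDoubleDual ℝ X))
    {Θ : X → ℝ}
    (hline : ∀ x v : X, Continuous fun t : ℝ => Θ (x + t • v))
    (hwusc : ∀ (u : ℕ → X) (x : X),
      (∀ f : X →L[ℝ] ℝ, Tendsto (fun n => f (u n)) atTop (𝓝 (f x))) →
      Filter.limsup (fun n => Θ (u n)) atTop ≤ Θ x)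
    (R : ℝ) : ∃ C, ∀ w, ‖w‖ ≤ R → Θ w ≤ C := by
  by_contra hcon
  push_neg at hcon
  have hex : ∀ n : ℕ, ∃ w, ‖w‖ ≤ R ∧ (n : ℝ) < Θ w := fun n => hcon (n : ℝ)
  choose u hu1 hu2 using hex
  obtain ⟨x, φ, hφ, hweak⟩ := weak_seq_compact hrefl hu1
  set C₀ : ℝ := |Θ x| + 1 with hC₀
  set N : ℕ := ⌈C₀⌉₊ with hN
  have hNC : C₀ ≤ (N : ℝ) := Nat.le_ceil _
  set v : ℕ → X := fun j => u (φ (j + N)) with hv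
  have hvweak : ∀ f : X →L[ℝ] ℝ, Tendsto (fun j => f (v j)) atTop (𝓝 (f x)) := by
    intro f
    exact (hweak f).comp (tendsto_add_atTop_nat N)
  have hvval : ∀ j, C₀ < Θ (v j) := by
    intro j
    have h1 : ((φ (j + N) : ℕ) : ℝ) < Θ (v j) := hu2 _
    have h2 : (N : ℝ) ≤ ((φ (j + N) : ℕ) : ℝ) := by
      exact_mod_cast le_trans (Nat.le_add_left N j) (hφ.le_apply)
    linarith
  have hivt : ∀ j : ℕ, ∃ t ∈ Set.Icc (0:ℝ) 1, Θ (x + t • (v j - x)) = C₀ := by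
    intro j
    have hc : ContinuousOn (fun t : ℝ => Θ (x + t • (v j - x))) (Set.Icc 0 1) :=
      (hline x (v j - x)).continuousOn
    have key := intermediate_value_Icc (le_of_lt one_pos) hc
    have hmem : C₀ ∈ Set.Icc (Θ (x + (0:ℝ) • (v j - x))) (Θ (x + (1:ℝ) • (v j - x))) := by
      constructor
      · have : x + (0:ℝ) • (v j - x) = x := by simp
        rw [this]
        have := le_abs_self (Θ x)
        rw [hC₀]; linarith
      · have : x + (1:ℝ) • (v j - x) = v j := by simp
        rw [this]; exact (hvval j).le
    obtain ⟨t, ht1, ht2⟩ := key hmem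
    exact ⟨t, ht1, ht2⟩
  choose t ht1 ht2 using hivt
  set z : ℕ → X := fun j => x + t j • (v j - x) with hz
  have hzweak := weak_tendsto_segment ht1 hvweak
  have hwl := hwusc z x hzweak
  have hlimsup : Filter.limsup (fun j => Θ (z j)) atTop = C₀ := by
    have : (fun j => Θ (z j)) = fun _ => C₀ := funext fun j => ht2 j
    rw [this]
    exact Filter.limsup_const _
  rw [hlimsup] at hwl
  have := le_abs_self (Θ x)
  rw [hC₀] at hwl
  linarith


end RicceriAux

open Filter Topology

/-- **Ricceri's local minimum theorem.** Let `X` be a reflexive real Banach space and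
`Φ, Ψ : X → ℝ` Gâteaux differentiable functionals (with Gâteaux derivatives `Φ'`, `Ψ'`),
with `Φ` norm-continuous, sequentially weakly lower semicontinuous and coercive, and `Ψ`
sequentially weakly upper semicontinuous. For `r > inf Φ` and `λ > 0` with `λ·φ(r) < 1`,
where `φ(r) = inf_{Φ(w)<r} (sup_{Φ(z)<r} Ψ(z) − Ψ(w))/(r − Φ(w))`, the functional
`J_λ = Φ − λΨ` restricted to `{Φ < r}` has a global minimum `w₀`, which is a local
minimum and critical point of `J_λ` on `X`. -/
theorem ricceri_local_minimum
    {X : Type*} [NormedAddCommGroup X] [NormedSpace ℝ X] [CompleteSpace X]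
    (hrefl : Function.Surjective (NormedSpace.inclusionInDoubleDual ℝ X))
    (Φ Ψ : X → ℝ) (Φ' Ψ' : X → (X →L[ℝ] ℝ))
    (hΦgateaux : ∀ w v : X,
      Tendsto (fun t : ℝ => (Φ (w + t • v) - Φ w) / t) (𝓝[≠] (0 : ℝ)) (𝓝 (Φ' w v)))
    (hΨgateaux : ∀ w v : X,
      Tendsto (fun t : ℝ => (Ψ (w + t • v) - Ψ w) / t) (𝓝[≠] (0 : ℝ)) (𝓝 (Ψ' w v)))
    (hΦcont : Continuous Φ)
    (hΦwlsc : ∀ (u : ℕ → X) (x : X),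
      (∀ f : X →L[ℝ] ℝ, Tendsto (fun n => f (u n)) atTop (𝓝 (f x))) →
      Φ x ≤ Filter.liminf (fun n => Φ (u n)) atTop)
    (hΦcoercive : Tendsto Φ (Filter.comap norm atTop) atTop)
    (hΨwusc : ∀ (u : ℕ → X) (x : X),
      (∀ f : X →L[ℝ] ℝ, Tendsto (fun n => f (u n)) atTop (𝓝 (f x))) →
      Filter.limsup (fun n => Ψ (u n)) atTop ≤ Ψ x)
    (r : ℝ) (hr : ∃ w : X, Φ w < r)
    (lam : ℝ) (hlam : 0 < lam)
    (hlamφ : lam * sInf ((fun w : X =>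
        (sSup (Ψ '' {z : X | Φ z < r}) - Ψ w) / (r - Φ w)) '' {w : X | Φ w < r}) < 1) :
    ∃ w₀ : X, Φ w₀ < r ∧
      (∀ w : X, Φ w < r → Φ w₀ - lam * Ψ w₀ ≤ Φ w - lam * Ψ w) ∧
      IsLocalMin (fun w => Φ w - lam * Ψ w) w₀ ∧
      Φ' w₀ = lam • Ψ' w₀ := by
  classical
  obtain ⟨w₁, hw₁⟩ := hr
  set S : Set X := {w : X | Φ w < r} with hSdef
  -- the sublevel set is bounded
  obtain ⟨R, hSR⟩ : ∃ R : ℝ, ∀ w ∈ S, ‖w‖ ≤ R := by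
    have hev : {w : X | r < Φ w} ∈ Filter.comap norm atTop :=
      hΦcoercive.eventually (eventually_gt_atTop r)
    obtain ⟨s, hs, hsub⟩ := Filter.mem_comap.1 hev
    obtain ⟨a, ha⟩ := Filter.mem_atTop_sets.1 hs
    refine ⟨max a 0, fun w hw => ?_⟩
    by_contra hcon
    push_neg at hcon
    have h1 : a ≤ ‖w‖ := le_trans (le_max_left _ _) hcon.le
    have h2 : w ∈ {w : X | r < Φ w} := hsub (ha _ h1)
    exact absurd hw (by simp only [hSdef, Set.mem_setOf_eq] at *; linarith)
  -- continuity along lines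
  have hΦline := continuous_along_line hΦgateaux
  have hΨline := continuous_along_line hΨgateaux
  -- bounds on the ball of radius R
  obtain ⟨CΦ, hCΦ⟩ := bddBelow_of_wlsc hrefl hΦline hΦwlsc R
  obtain ⟨CΨ, hCΨ⟩ := bddAbove_of_wusc hrefl hΨline hΨwusc R
  set K : ℝ := sSup (Ψ '' S) with hKdef
  have hSne : S.Nonempty := ⟨w₁, hw₁⟩
  have hΨbdd : BddAbove (Ψ '' S) := by
    refine ⟨CΨ, fun p hp => ?_⟩
    obtain ⟨z, hz, rfl⟩ := hp
    exact hCΨ z (hSR z hz)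
  have hKub : ∀ z ∈ S, Ψ z ≤ K := fun z hz => le_csSup hΨbdd (Set.mem_image_of_mem _ hz)
  -- witness from the hypothesis on φ(r)
  obtain ⟨wb, hwbS, hwb⟩ : ∃ wb ∈ S, lam * (K - Ψ wb) < r - Φ wb := by
    set T : Set ℝ := (fun w : X => (K - Ψ w) / (r - Φ w)) '' S with hTdef
    have hTne : T.Nonempty := hSne.image _
    have hsInf : sInf T < 1 / lam := by
      rw [lt_div_iff₀ hlam]
      rw [mul_comm]
      exact hlamφ
    have hexa : ∃ a ∈ T, a < 1 / lam := by
      by_cases hbdd : BddBelow T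
      · exact (csInf_lt_iff hbdd hTne).1 hsInf
      · obtain ⟨a, haT, ha⟩ := not_bddBelow_iff.1 hbdd (1 / lam)
        exact ⟨a, haT, ha⟩
    obtain ⟨a, haT, ha⟩ := hexa
    obtain ⟨wb, hwbS, rfl⟩ := haT
    have hden : 0 < r - Φ wb := by
      have : Φ wb < r := hwbS
      linarith
    refine ⟨wb, hwbS, ?_⟩
    rw [div_lt_div_iff₀ hden hlam] at ha
    · linarith [ha]
  -- infimum of J on S
  set J : X → ℝ := fun w => Φ w - lam * Ψ w with hJdef
  have hJlb : ∀ w ∈ S, CΦ - lam * K ≤ J w := by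
    intro w hw
    have h1 : CΦ ≤ Φ w := hCΦ w (hSR w hw)
    have h2 : Ψ w ≤ K := hKub w hw
    have h3 : lam * Ψ w ≤ lam * K := mul_le_mul_of_nonneg_left h2 hlam.le
    show CΦ - lam * K ≤ Φ w - lam * Ψ w
    linarith
  have hJbdd : BddBelow (J '' S) := by
    refine ⟨CΦ - lam * K, fun p hp => ?_⟩
    obtain ⟨z, hz, rfl⟩ := hp
    exact hJlb z hz
  set m : ℝ := sInf (J '' S) with hmdef
  have hmle : ∀ w ∈ S, m ≤ J w := fun w hw => csInf_le hJbdd (Set.mem_image_of_mem _ hw)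
  -- minimizing sequence
  have hminseq : ∀ n : ℕ, ∃ w ∈ S, J w < m + 1 / (n + 1) := by
    intro n
    have h1 : m < m + 1 / (n + 1) := by
      have : (0:ℝ) < 1 / (n + 1) := by positivity
      linarith
    obtain ⟨p, hp, hp2⟩ := (csInf_lt_iff hJbdd (hSne.image _)).1 h1
    obtain ⟨w, hw, rfl⟩ := hp
    exact ⟨w, hw, hp2⟩
  choose u huS huJ using hminseq
  have hJtend : Tendsto (fun n => J (u n)) atTop (𝓝 m) := by
    have hup : Tendsto (fun n : ℕ => m + 1 / ((n:ℝ) + 1)) atTop (𝓝 (m + 0)) :=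
      tendsto_const_nhds.add tendsto_one_div_add_atTop_nhds_zero_nat
    rw [add_zero] at hup
    exact tendsto_of_tendsto_of_tendsto_of_le_of_le tendsto_const_nhds hup
      (fun n => hmle _ (huS n)) (fun n => (huJ n).le)
  have hub : ∀ n, ‖u n‖ ≤ R := fun n => hSR _ (huS n)
  obtain ⟨x, φ, hφ, hweak⟩ := weak_seq_compact hrefl hub
  -- extract subsequences making Φ and Ψ converge
  have hpmem : ∀ j, Φ (u (φ j)) ∈ Set.Icc CΦ r := by
    intro j
    exact ⟨hCΦ _ (hub _), (huS (φ j)).le⟩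
  obtain ⟨A, hA, φ₂, hφ₂, hptend⟩ := (isCompact_Icc).tendsto_subseq hpmem
  have hqmem : ∀ j, Ψ (u (φ (φ₂ j))) ∈ Set.Icc ((CΦ - (m + 1)) / lam) ((r - m) / lam) := by
    intro j
    set n := φ (φ₂ j)
    have h1 : m ≤ J (u n) := hmle _ (huS n)
    have h2 : J (u n) < m + 1 / ((n:ℝ) + 1) := huJ n
    have h3 : 1 / ((n:ℝ) + 1) ≤ 1 := by
      rw [div_le_one (by positivity)]
      have : (0:ℝ) ≤ (n:ℝ) := Nat.cast_nonneg n
      linarith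
    have h4 : CΦ ≤ Φ (u n) := hCΦ _ (hub _)
    have h5 : Φ (u n) < r := huS n
    have hJval : J (u n) = Φ (u n) - lam * Ψ (u n) := rfl
    constructor
    · rw [div_le_iff₀ hlam]
      have : lam * Ψ (u n) = Φ (u n) - J (u n) := by rw [hJval]; ring
      rw [mul_comm]
      rw [this]
      linarith
    · rw [le_div_iff₀ hlam]
      have : lam * Ψ (u n) = Φ (u n) - J (u n) := by rw [hJval]; ring
      rw [mul_comm]
      rw [this]
      linarith
  obtain ⟨B, hB, φ₃, hφ₃, hqtend⟩ := (isCompact_Icc).tendsto_subseq hqmem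
  set σ : ℕ → ℕ := fun j => φ (φ₂ (φ₃ j)) with hσdef
  set v : ℕ → X := fun j => u (σ j) with hvdef
  have hweakv : ∀ f : X →L[ℝ] ℝ, Tendsto (fun j => f (v j)) atTop (𝓝 (f x)) := by
    intro f
    exact (hweak f).comp ((hφ₂.comp hφ₃).tendsto_atTop)
  have hΦv : Tendsto (fun j => Φ (v j)) atTop (𝓝 A) := hptend.comp hφ₃.tendsto_atTop
  have hΨv : Tendsto (fun j => Ψ (v j)) atTop (𝓝 B) := hqtend
  have hJv : Tendsto (fun j => J (v j)) atTop (𝓝 m) :=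
    hJtend.comp ((hφ.comp (hφ₂.comp hφ₃)).tendsto_atTop)
  have hmAB : m = A - lam * B := by
    have h1 : Tendsto (fun j => Φ (v j) - lam * Ψ (v j)) atTop (𝓝 (A - lam * B)) :=
      hΦv.sub (hΨv.const_mul lam)
    exact tendsto_nhds_unique hJv h1
  have hΦx : Φ x ≤ A := by
    have := hΦwlsc v x hweakv
    rwa [hΦv.liminf_eq] at this
  have hΨx : B ≤ Ψ x := by
    have := hΨwusc v x hweakv
    rwa [hΨv.limsup_eq] at this
  have hJxm : J x ≤ m := by
    have h1 : lam * B ≤ lam * Ψ x := mul_le_mul_of_nonneg_left hΨx hlam.le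
    show Φ x - lam * Ψ x ≤ m
    rw [hmAB]
    linarith
  have hBK : B ≤ K := by
    apply le_of_tendsto hΨv
    exact Eventually.of_forall fun j => hKub _ (huS _)
  have hΦxr : Φ x < r := by
    have h1 : m ≤ J wb := hmle _ hwbS
    have h2 : J wb = Φ wb - lam * Ψ wb := rfl
    have h3 : lam * B ≤ lam * K := mul_le_mul_of_nonneg_left hBK hlam.le
    have h4 : A = m + lam * B := by rw [hmAB]; ring
    have h5 : lam * Ψ wb ≤ lam * K := mul_le_mul_of_nonneg_left (hKub _ hwbS) hlam.le
    -- lam * (K - Ψ wb) < r - Φ wb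
    have h6 : lam * K - lam * Ψ wb < r - Φ wb := by
      have := hwb; rw [mul_sub] at this; linarith
    rw [h2] at h1
    linarith
  have hxS : x ∈ S := hΦxr
  -- global minimality on S
  have hglobal : ∀ w : X, Φ w < r → J x ≤ J w := fun w hw => le_trans hJxm (hmle w hw)
  -- local minimality
  have hSopen : IsOpen S := isOpen_lt hΦcont continuous_const
  have hlocmin : IsLocalMin J x := by
    filter_upwards [hSopen.mem_nhds hxS] with w hw
    exact le_trans hJxm (hmle w hw)
  -- critical point
  have hcrit : Φ' x = lam • Ψ' x := by
    ext dv
    have hquot : Tendsto (fun t : ℝ => (J (x + t • dv) - J x) / t) (𝓝[≠] (0:ℝ))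
        (𝓝 (Φ' x dv - lam * Ψ' x dv)) := by
      have h1 := (hΦgateaux x dv).sub ((hΨgateaux x dv).const_mul lam)
      apply h1.congr'
      filter_upwards [self_mem_nhdsWithin] with t ht
      have ht' : t ≠ 0 := ht
      show (Φ (x + t • dv) - Φ x) / t - lam * ((Ψ (x + t • dv) - Ψ x) / t) =
        (J (x + t • dv) - J x) / t
      field_simp
      ring
    have hloc : ∀ᶠ t in 𝓝 (0:ℝ), J x ≤ J (x + t • dv) := by
      have hcont : Tendsto (fun t : ℝ => x + t • dv) (𝓝 0) (𝓝 x) := by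
        have : Continuous fun t : ℝ => x + t • dv := by continuity
        have h2 := this.tendsto 0
        simpa using h2
      exact hcont.eventually hlocmin
    have hge : 0 ≤ Φ' x dv - lam * Ψ' x dv := by
      have h1 : Tendsto (fun t : ℝ => (J (x + t • dv) - J x) / t) (𝓝[>] (0:ℝ))
          (𝓝 (Φ' x dv - lam * Ψ' x dv)) :=
        hquot.mono_left (nhdsWithin_mono 0 (fun t ht => ne_of_gt ht))
      apply ge_of_tendsto h1
      filter_upwards [self_mem_nhdsWithin,
        eventually_nhdsWithin_of_eventually_nhds hloc] with t ht hJt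
      exact div_nonneg (by linarith [hJt]) (le_of_lt ht)
    have hle : Φ' x dv - lam * Ψ' x dv ≤ 0 := by
      have h1 : Tendsto (fun t : ℝ => (J (x + t • dv) - J x) / t) (𝓝[<] (0:ℝ))
          (𝓝 (Φ' x dv - lam * Ψ' x dv)) :=
        hquot.mono_left (nhdsWithin_mono 0 (fun t ht => ne_of_lt ht))
      apply le_of_tendsto h1
      filter_upwards [self_mem_nhdsWithin,
        eventually_nhdsWithin_of_eventually_nhds hloc] with t ht hJt
      exact div_nonpos_of_nonneg_of_nonpos (by linarith [hJt]) (le_of_lt ht)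
    have : Φ' x dv - lam * Ψ' x dv = 0 := le_antisymm hle hge
    show Φ' x dv = (lam • Ψ' x) dv
    rw [ContinuousLinearMap.smul_apply, smul_eq_mul]
    linarith
  exact ⟨x, hΦxr, hglobal, hlocmin, hcrit⟩
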